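/- Let A be an N×N real matrix with characteristic polynomial P, and let P₁ and P₂ be real polynomials such that for every real μ one has P(iμ) = P₁(μ) + i·P₂(μ), where P is evaluated in ℂ via the canonical embedding (P₁ collects the real parts and P₂ the imaginary parts of P(iμ)). If the complexification of A has an eigenvalue z ∈ ℂ with Re z = 0, then det(A) · Res(P₁, P₂) = 0, where Res denotes the resultant of the two polynomials. -/

import Mathlib

open Polynomial

/-- The Sylvester matrix of two real polynomials `p` and `q`, of size
`(p.natDegree + q.natDegree) × (p.natDegree + q.natDegree)`.  The first
`q.natDegree` rows contain the shifted coefficients of `p`, the remaining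
`p.natDegree` rows the shifted coefficients of `q`. -/
noncomputable def sylvesterMatrix (p q : Polynomial ℝ) :
    Matrix (Fin (q.natDegree + p.natDegree)) (Fin (q.natDegree + p.natDegree)) ℝ :=
  Matrix.of fun i j =>
    if (i : ℕ) < q.natDegree then
      -- row i of the `p`-block: entries p_m, p_{m-1}, …, p_0 starting at column i
      if (i : ℕ) ≤ (j : ℕ) ∧ (j : ℕ) ≤ (i : ℕ) + p.natDegree then
        p.coeff (p.natDegree - ((j : ℕ) - (i : ℕ)))
      else 0
    else
      -- row (q.natDegree + i') of the `q`-block, with i' = i - q.natDegree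
      if (i : ℕ) - q.natDegree ≤ (j : ℕ) ∧ (j : ℕ) ≤ ((i : ℕ) - q.natDegree) + q.natDegree then
        q.coeff (q.natDegree - ((j : ℕ) - ((i : ℕ) - q.natDegree)))
      else 0

/-- The resultant of two real polynomials: the determinant of their Sylvester matrix. -/
noncomputable def resultant (p q : Polynomial ℝ) : ℝ :=
  (sylvesterMatrix p q).det

lemma rowSum (r : Polynomial ℝ) (μ : ℝ) (hr : r.eval μ = 0) (c i : ℕ) (hi : i < c) :
    ∑ j ∈ Finset.range (c + r.natDegree),
      (if i ≤ j ∧ j ≤ i + r.natDegree then r.coeff (r.natDegree - (j - i)) else 0) *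
        μ ^ (c + r.natDegree - 1 - j) = 0 := by
  set d := r.natDegree with hd
  have h1 : ∀ j ∈ Finset.range (c + d),
      (if i ≤ j ∧ j ≤ i + d then r.coeff (d - (j - i)) else 0) * μ ^ (c + d - 1 - j)
      = if j ∈ Finset.Icc i (i + d) then r.coeff (d - (j - i)) * μ ^ (c + d - 1 - j) else 0 := by
    intro j _
    by_cases hc : i ≤ j ∧ j ≤ i + d <;> simp [Finset.mem_Icc, hc]
  rw [Finset.sum_congr rfl h1, Finset.sum_ite_mem]
  have h2 : Finset.range (c + d) ∩ Finset.Icc i (i + d) = Finset.Icc i (i + d) := by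
    apply Finset.inter_eq_right.mpr
    intro j hj
    simp only [Finset.mem_Icc, Finset.mem_range] at *
    omega
  rw [h2, ← Finset.Ico_add_one_right_eq_Icc, Finset.sum_Ico_eq_sum_range]
  have h3 : i + d + 1 - i = d + 1 := by omega
  rw [h3]
  have key : ∑ t ∈ Finset.range (d + 1), r.coeff (d - (i + t - i)) * μ ^ (c + d - 1 - (i + t))
      = ∑ s ∈ Finset.range (d + 1), r.coeff s * μ ^ (c - 1 - i) * μ ^ s := by
    rw [← Finset.sum_range_reflect (fun s => r.coeff s * μ ^ (c - 1 - i) * μ ^ s) (d + 1)]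
    apply Finset.sum_congr rfl
    intro t ht
    simp only [Finset.mem_range] at ht
    have e1 : i + t - i = t := by omega
    have e2 : d + 1 - 1 - t = d - t := by omega
    have e3 : c + d - 1 - (i + t) = c - 1 - i + (d - t) := by omega
    simp only [e1, e2, e3, pow_add]
    ring
  rw [key]
  have hfac : ∑ s ∈ Finset.range (d + 1), r.coeff s * μ ^ (c - 1 - i) * μ ^ s
      = μ ^ (c - 1 - i) * ∑ s ∈ Finset.range (d + 1), r.coeff s * μ ^ s := by
    rw [Finset.mul_sum]; apply Finset.sum_congr rfl; intro s _; ring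
  rw [hfac, ← Polynomial.eval_eq_sum_range, hr, mul_zero]

lemma resultant_eq_zero_of_common_root (p q : Polynomial ℝ) (μ : ℝ)
    (hp : p.eval μ = 0) (hq : q.eval μ = 0) (hpos : 0 < q.natDegree + p.natDegree) :
    _root_.resultant p q = 0 := by
  rw [_root_.resultant, ← Matrix.exists_mulVec_eq_zero_iff]
  refine ⟨fun j => μ ^ (q.natDegree + p.natDegree - 1 - (j : ℕ)), ?_, ?_⟩
  · intro h0
    have := congrFun h0 ⟨q.natDegree + p.natDegree - 1, by omega⟩
    simp at this
  · funext i
    simp only [Matrix.mulVec, dotProduct, sylvesterMatrix, Matrix.of_apply, Pi.zero_apply]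
    rw [Fin.sum_univ_eq_sum_range
      (fun j => (if (i : ℕ) < q.natDegree then
          if (i : ℕ) ≤ j ∧ j ≤ (i : ℕ) + p.natDegree then
            p.coeff (p.natDegree - (j - (i : ℕ))) else 0
        else
          if (i : ℕ) - q.natDegree ≤ j ∧ j ≤ ((i : ℕ) - q.natDegree) + q.natDegree then
            q.coeff (q.natDegree - (j - ((i : ℕ) - q.natDegree))) else 0)
        * μ ^ (q.natDegree + p.natDegree - 1 - j)) (q.natDegree + p.natDegree)]
    by_cases hi : (i : ℕ) < q.natDegree
    · simp only [if_pos hi]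
      exact rowSum p μ hp q.natDegree (i : ℕ) hi
    · simp only [if_neg hi]
      have hk : q.natDegree ≤ (i : ℕ) := le_of_not_gt hi
      have hlt : (i : ℕ) < q.natDegree + p.natDegree := i.isLt
      generalize (i : ℕ) = k at hk hlt ⊢
      rw [Nat.add_comm q.natDegree p.natDegree]
      exact rowSum q μ hq p.natDegree (k - q.natDegree) (by omega)

/-- Let `A` be an `N×N` real matrix (`N ≥ 1`) with characteristic polynomial `P`, and
let `P₁, P₂ ∈ ℝ[X]` satisfy `P(iμ) = P₁(μ) + i·P₂(μ)` for all real `μ`.  If the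
complexification of `A` has an eigenvalue `z` with `Re z = 0`, then
`det A · Res(P₁, P₂) = 0`. -/
theorem det_mul_resultant_eq_zero_of_imaginary_eigenvalue
    (N : ℕ) (hN : 1 ≤ N) (A : Matrix (Fin N) (Fin N) ℝ) (P₁ P₂ : Polynomial ℝ)
    (hP : ∀ μ : ℝ, ((Matrix.charpoly A).map (algebraMap ℝ ℂ)).eval (Complex.I * (μ : ℂ))
      = (↑(P₁.eval μ) : ℂ) + Complex.I * (↑(P₂.eval μ) : ℂ))
    (h : ∃ z : ℂ, ((Matrix.charpoly A).map (algebraMap ℝ ℂ)).IsRoot z ∧ z.re = 0) :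
    A.det * _root_.resultant P₁ P₂ = 0 := by
  obtain ⟨z, hz, hre⟩ := h
  set μ := z.im with hμ
  have hzz : z = Complex.I * (μ : ℂ) := by
    apply Complex.ext <;> simp [hre, hμ]
  have hmain := hP μ
  rw [← hzz, hz] at hmain
  have h1 : P₁.eval μ = 0 := by
    have := congrArg Complex.re hmain
    simpa using this.symm
  have h2 : P₂.eval μ = 0 := by
    have := congrArg Complex.im hmain
    simpa using this.symm
  by_cases hdeg : 0 < P₂.natDegree + P₁.natDegree
  · rw [resultant_eq_zero_of_common_root P₁ P₂ μ h1 h2 hdeg, mul_zero]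
  · have hd1 : P₁.natDegree = 0 := by omega
    have hd2 : P₂.natDegree = 0 := by omega
    have hP1 : P₁ = 0 := by
      have hc := Polynomial.eq_C_of_natDegree_eq_zero hd1
      rw [hc, Polynomial.eval_C] at h1
      rw [hc, h1, map_zero]
    have hP2 : P₂ = 0 := by
      have hc := Polynomial.eq_C_of_natDegree_eq_zero hd2
      rw [hc, Polynomial.eval_C] at h2
      rw [hc, h2, map_zero]
    have h00 := hP 0
    rw [hP1, hP2] at h00
    simp only [Complex.ofReal_zero, mul_zero, Polynomial.eval_zero, Complex.ofReal_zero,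
      add_zero, zero_add, Polynomial.eval_map] at h00
    have hce : (Matrix.charpoly A).eval 0 = 0 := by
      rw [Polynomial.eval₂_at_zero, Complex.coe_algebraMap, Complex.ofReal_eq_zero,
        Polynomial.coeff_zero_eq_eval_zero] at h00
      exact h00
    have hdet : A.det = 0 := by
      rw [Matrix.det_eq_sign_charpoly_coeff]
      rw [Polynomial.coeff_zero_eq_eval_zero, hce, mul_zero]
    rw [hdet, zero_mul]
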